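/- For each γ > 0 the matrices Σ̂_{0γ} and M̂₀^⊤Σ̂_{0γ}⁻¹M̂₀ are invertible, and the feasible predictor ŷ'_γ = M̂' θ̂_{0γ} + Δ̂^⊤ Σ̂_{0γ}⁻¹ (y₀ − M̂₀ θ̂_{0γ}), where θ̂_{0γ} = (M̂₀^⊤Σ̂_{0γ}⁻¹M̂₀)⁻¹M̂₀^⊤Σ̂_{0γ}⁻¹y₀, converges as γ → 0⁺ to X'(X₀^⊤X₀)⁻¹X₀^⊤y₀ for every fixed y₀ ∈ ℝ^{p−q}. -/

import Mathlib

open Matrix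

lemma myPosDef_smul {m : Type*} [Fintype m] [DecidableEq m] {M : Matrix m m ℝ} (hM : M.PosDef)
    {c : ℝ} (hc : 0 < c) : (c • M).PosDef := by
  refine Matrix.PosDef.of_dotProduct_mulVec_pos ?_ fun x hx => ?_
  · have ht : Mᵀ = M := by
      rw [← Matrix.conjTranspose_eq_transpose_of_trivial]; exact hM.1.eq
    simp [Matrix.IsHermitian, conjTranspose_smul, ht]
  · rw [smul_mulVec, dotProduct_smul]
    exact mul_pos hc (hM.dotProduct_mulVec_pos hx)

lemma myInj {a b : ℕ} (X : Matrix (Fin a) (Fin b) ℝ) (hX : IsUnit (Xᵀ * X))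
    (w : Fin b → ℝ) (h : X *ᵥ w = 0) : w = 0 := by
  have hd : IsUnit (Xᵀ * X).det := (Matrix.isUnit_iff_isUnit_det _).mp hX
  have h2 : (Xᵀ * X) *ᵥ w = 0 := by
    rw [← Matrix.mulVec_mulVec, h, Matrix.mulVec_zero]
  have := congrArg (fun v => (Xᵀ * X)⁻¹ *ᵥ v) h2
  simpa [Matrix.mulVec_mulVec, Matrix.nonsing_inv_mul _ hd] using this

lemma myPosDef_conj {a b : ℕ} {S : Matrix (Fin a) (Fin a) ℝ} (hS : S.PosDef)
    (M : Matrix (Fin a) (Fin b) ℝ) (hM : ∀ w, M *ᵥ w = 0 → w = 0) :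
    (Mᵀ * S * M).PosDef := by
  refine Matrix.PosDef.of_dotProduct_mulVec_pos ?_ fun x hx => ?_
  · have := Matrix.isHermitian_conjTranspose_mul_mul M hS.1
    rwa [Matrix.conjTranspose_eq_transpose_of_trivial] at this
  · have hv : (Mᵀ * S * M) *ᵥ x = Mᵀ *ᵥ (S *ᵥ (M *ᵥ x)) := by
      rw [Matrix.mulVec_mulVec, Matrix.mulVec_mulVec]
    have hstar : star x = x := funext fun i => star_trivial _
    rw [hv, hstar, Matrix.dotProduct_mulVec, Matrix.vecMul_transpose]
    have hMx : M *ᵥ x ≠ 0 := fun h => hx (hM x h)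
    have h2 := hS.dotProduct_mulVec_pos hMx
    rwa [show star (M *ᵥ x) = M *ᵥ x from funext fun i => star_trivial _] at h2

set_option maxHeartbeats 2000000 in
theorem stmt_4 (p n K q : ℕ) (hK : 0 < K) (hq : 0 < q) (hKn : K ≤ n)
    (hnpq : n < p - q)
    (X₀ : Matrix (Fin (p - q)) (Fin n) ℝ) (X' : Matrix (Fin q) (Fin n) ℝ)
    (A : Matrix (Fin n) (Fin K) ℝ)
    (hX₀ : IsUnit (X₀ᵀ * X₀)) (hA : IsUnit (Aᵀ * A))
    (M₀ : Matrix (Fin (p - q)) (Fin K) ℝ) (hM₀ : M₀ = X₀ * A * (Aᵀ * A)⁻¹)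
    (M' : Matrix (Fin q) (Fin K) ℝ) (hM' : M' = X' * A * (Aᵀ * A)⁻¹)
    (Sg : ℝ → Matrix (Fin (p - q)) (Fin (p - q)) ℝ)
    (hSg : ∀ γ : ℝ, Sg γ = X₀ * (1 - A * (Aᵀ * A)⁻¹ * Aᵀ) * X₀ᵀ
      + γ • (1 : Matrix (Fin (p - q)) (Fin (p - q)) ℝ))
    (Dt : Matrix (Fin q) (Fin (p - q)) ℝ)
    (hDt : Dt = X' * (1 - A * (Aᵀ * A)⁻¹ * Aᵀ) * X₀ᵀ)
    (y₀ : Fin (p - q) → ℝ) :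
    (∀ γ : ℝ, 0 < γ → (Sg γ).PosDef ∧ IsUnit (M₀ᵀ * (Sg γ)⁻¹ * M₀)) ∧
      Filter.Tendsto
        (fun γ : ℝ =>
          let θ₀ : Fin K → ℝ := ((M₀ᵀ * (Sg γ)⁻¹ * M₀)⁻¹ * (M₀ᵀ * (Sg γ)⁻¹)).mulVec y₀
          M'.mulVec θ₀ + (Dt * (Sg γ)⁻¹).mulVec (y₀ - M₀.mulVec θ₀))
        (nhdsWithin 0 (Set.Ioi 0))
        (nhds ((X' * (X₀ᵀ * X₀)⁻¹ * X₀ᵀ).mulVec y₀)) := by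
  -- ### basic algebraic facts
  have hAd : IsUnit (Aᵀ * A).det := (Matrix.isUnit_iff_isUnit_det _).mp hA
  have hCd : IsUnit (X₀ᵀ * X₀).det := (Matrix.isUnit_iff_isUnit_det _).mp hX₀
  have hAAinv : (Aᵀ * A) * (Aᵀ * A)⁻¹ = 1 := Matrix.mul_nonsing_inv _ hAd
  have hAAinv' : (Aᵀ * A)⁻¹ * (Aᵀ * A) = 1 := Matrix.nonsing_inv_mul _ hAd
  have hTinv : ((Aᵀ * A)⁻¹)ᵀ = (Aᵀ * A)⁻¹ := by
    rw [Matrix.transpose_nonsing_inv, Matrix.transpose_mul, Matrix.transpose_transpose]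
  have hAG : Aᵀ * (A * (Aᵀ * A)⁻¹) = 1 := by rw [← Matrix.mul_assoc]; exact hAAinv
  have hQA : (1 - A * (Aᵀ * A)⁻¹ * Aᵀ) * A = 0 := by
    rw [Matrix.sub_mul, Matrix.one_mul, Matrix.mul_assoc (A * (Aᵀ * A)⁻¹) Aᵀ A,
      Matrix.mul_assoc A (Aᵀ * A)⁻¹ (Aᵀ * A), hAAinv', Matrix.mul_one, sub_self]
  have hQQ : (1 - A * (Aᵀ * A)⁻¹ * Aᵀ) * (1 - A * (Aᵀ * A)⁻¹ * Aᵀ)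
      = 1 - A * (Aᵀ * A)⁻¹ * Aᵀ := by
    rw [Matrix.mul_sub, Matrix.mul_one,
      ← Matrix.mul_assoc (1 - A * (Aᵀ * A)⁻¹ * Aᵀ) (A * (Aᵀ * A)⁻¹) Aᵀ]
    rw [show (1 - A * (Aᵀ * A)⁻¹ * Aᵀ) * (A * (Aᵀ * A)⁻¹)
        = ((1 - A * (Aᵀ * A)⁻¹ * Aᵀ) * A) * (Aᵀ * A)⁻¹ from (Matrix.mul_assoc _ _ _).symm,
      hQA, Matrix.zero_mul, Matrix.zero_mul, sub_zero]
  have hQsymm : (1 - A * (Aᵀ * A)⁻¹ * Aᵀ)ᵀ = 1 - A * (Aᵀ * A)⁻¹ * Aᵀ := by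
    simp only [transpose_sub, transpose_one, Matrix.transpose_mul,
      Matrix.transpose_transpose, hTinv, Matrix.mul_assoc]
  have hAAY : ∀ (Z : Matrix (Fin K) (Fin n) ℝ), (Aᵀ * A) * ((Aᵀ * A)⁻¹ * Z) = Z := fun Z => by
    rw [← Matrix.mul_assoc, hAAinv, Matrix.one_mul]
  have hAAY' : ∀ (Z : Matrix (Fin K) (Fin n) ℝ), (Aᵀ * A)⁻¹ * ((Aᵀ * A) * Z) = Z := fun Z => by
    rw [← Matrix.mul_assoc, hAAinv', Matrix.one_mul]
  -- ### positivity facts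
  have hQps : (1 - A * (Aᵀ * A)⁻¹ * Aᵀ).PosSemidef := by
    have h := Matrix.posSemidef_conjTranspose_mul_self (1 - A * (Aᵀ * A)⁻¹ * Aᵀ)
    rwa [Matrix.conjTranspose_eq_transpose_of_trivial, hQsymm, hQQ] at h
  have hSps : (X₀ * (1 - A * (Aᵀ * A)⁻¹ * Aᵀ) * X₀ᵀ).PosSemidef := by
    have h := hQps.mul_mul_conjTranspose_same X₀
    rwa [Matrix.conjTranspose_eq_transpose_of_trivial] at h
  have hCps : (X₀ᵀ * X₀).PosSemidef := by
    have h := Matrix.posSemidef_conjTranspose_mul_self X₀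
    rwa [Matrix.conjTranspose_eq_transpose_of_trivial] at h
  have hCpd : (X₀ᵀ * X₀).PosDef := by
    refine Matrix.PosDef.of_dotProduct_mulVec_pos hCps.1 fun x hx => ?_
    rcases (hCps.dotProduct_mulVec_nonneg x).lt_or_eq with h | h
    · exact h
    · exfalso
      apply hx
      have h0 : (X₀ᵀ * X₀) *ᵥ x = 0 := (hCps.dotProduct_mulVec_zero_iff x).mp h.symm
      have h1 := congrArg (fun v => (X₀ᵀ * X₀)⁻¹ *ᵥ v) h0
      simpa [Matrix.mulVec_mulVec, Matrix.nonsing_inv_mul _ hCd] using h1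
  -- ### part 1
  have part1 : ∀ γ : ℝ, 0 < γ → (Sg γ).PosDef ∧ IsUnit (M₀ᵀ * (Sg γ)⁻¹ * M₀) := by
    intro γ hγ
    have hSpd : (Sg γ).PosDef := by
      rw [hSg]
      exact Matrix.PosDef.posSemidef_add hSps
        (by rw [Matrix.smul_one_eq_diagonal]; exact Matrix.PosDef.diagonal fun _ => hγ)
    refine ⟨hSpd, ?_⟩
    have hM₀inj : ∀ w, M₀ *ᵥ w = 0 → w = 0 := by
      intro w hw
      rw [hM₀, Matrix.mul_assoc, ← Matrix.mulVec_mulVec] at hw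
      have h1 : (A * (Aᵀ * A)⁻¹) *ᵥ w = 0 := myInj X₀ hX₀ _ hw
      have h2 := congrArg (fun v => Aᵀ *ᵥ v) h1
      simpa [Matrix.mulVec_mulVec, hAG, Matrix.one_mulVec] using h2
    exact (myPosDef_conj hSpd.inv M₀ hM₀inj).isUnit
  refine ⟨part1, ?_⟩
  -- ### the key per-γ identity
  have key : ∀ γ : ℝ, 0 < γ →
      M' *ᵥ (((M₀ᵀ * (Sg γ)⁻¹ * M₀)⁻¹ * (M₀ᵀ * (Sg γ)⁻¹)) *ᵥ y₀) +
        (Dt * (Sg γ)⁻¹) *ᵥ (y₀ - M₀ *ᵥ (((M₀ᵀ * (Sg γ)⁻¹ * M₀)⁻¹ * (M₀ᵀ * (Sg γ)⁻¹)) *ᵥ y₀)) =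
      (X' * (X₀ᵀ * X₀ + γ • (1 - A * (Aᵀ * A)⁻¹ * Aᵀ))⁻¹ * X₀ᵀ) *ᵥ y₀ := by
    intro γ hγ
    have hSpd : (Sg γ).PosDef := (part1 γ hγ).1
    have hSd : IsUnit (Sg γ).det := (Matrix.isUnit_iff_isUnit_det _).mp hSpd.isUnit
    set F : Matrix (Fin n) (Fin n) ℝ :=
      (X₀ᵀ * X₀) * (1 - A * (Aᵀ * A)⁻¹ * Aᵀ) + γ • 1 with hFdef
    have hEpd : ((1 - A * (Aᵀ * A)⁻¹ * Aᵀ) + γ • (X₀ᵀ * X₀)⁻¹).PosDef :=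
      Matrix.PosDef.posSemidef_add hQps (myPosDef_smul hCpd.inv hγ)
    have hFeq : (X₀ᵀ * X₀) * ((1 - A * (Aᵀ * A)⁻¹ * Aᵀ) + γ • (X₀ᵀ * X₀)⁻¹) = F := by
      rw [hFdef, Matrix.mul_add, Matrix.mul_smul, Matrix.mul_nonsing_inv _ hCd]
    have hFu : IsUnit F := by rw [← hFeq]; exact hX₀.mul hEpd.isUnit
    have hFd : IsUnit F.det := (Matrix.isUnit_iff_isUnit_det _).mp hFu
    have hFFr : F * F⁻¹ = 1 := Matrix.mul_nonsing_inv _ hFd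
    have hFFl : F⁻¹ * F = 1 := Matrix.nonsing_inv_mul _ hFd
    have h1 : X₀ᵀ * Sg γ = F * X₀ᵀ := by
      rw [hSg, hFdef]
      simp only [Matrix.mul_add, Matrix.add_mul, Matrix.mul_smul, Matrix.smul_mul,
        Matrix.mul_one, Matrix.one_mul, Matrix.mul_assoc]
    have hXS : X₀ᵀ * (Sg γ)⁻¹ = F⁻¹ * X₀ᵀ := by
      have h2 := congrArg (fun M => F⁻¹ * M * (Sg γ)⁻¹) h1
      simp only [Matrix.mul_assoc] at h2
      rw [Matrix.mul_nonsing_inv _ hSd, Matrix.mul_one,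
        ← Matrix.mul_assoc F⁻¹ F (X₀ᵀ * (Sg γ)⁻¹), hFFl, Matrix.one_mul] at h2
      exact h2.symm
    have hMS : M₀ᵀ * (Sg γ)⁻¹ = (Aᵀ * A)⁻¹ * (Aᵀ * (F⁻¹ * X₀ᵀ)) := by
      rw [hM₀]
      simp only [Matrix.transpose_mul, Matrix.transpose_transpose, hTinv,
        Matrix.mul_assoc, hXS]
    set NN : Matrix (Fin K) (Fin K) ℝ :=
      (Aᵀ * A)⁻¹ * (Aᵀ * (F⁻¹ * (X₀ᵀ * (X₀ * (A * (Aᵀ * A)⁻¹))))) with hNNdef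
    have hN : M₀ᵀ * (Sg γ)⁻¹ * M₀ = NN := by
      rw [hMS, hM₀, hNNdef]
      simp only [Matrix.mul_assoc]
    have hNu : IsUnit NN := by rw [← hN]; exact (part1 γ hγ).2
    have hNd : IsUnit NN.det := (Matrix.isUnit_iff_isUnit_det _).mp hNu
    have hNNinv : NN * NN⁻¹ = 1 := Matrix.mul_nonsing_inv _ hNd
    have hAZ : ∀ Y : Matrix (Fin K) (Fin n) ℝ,
        Aᵀ * (F⁻¹ * (X₀ᵀ * (X₀ * (A * ((Aᵀ * A)⁻¹ * (NN⁻¹ * Y)))))) = (Aᵀ * A) * Y := by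
      intro Y
      calc Aᵀ * (F⁻¹ * (X₀ᵀ * (X₀ * (A * ((Aᵀ * A)⁻¹ * (NN⁻¹ * Y))))))
          = (Aᵀ * A) * ((NN * NN⁻¹) * Y) := by
            rw [hNNdef]; simp only [Matrix.mul_assoc, hAAY]
        _ = (Aᵀ * A) * Y := by rw [hNNinv, Matrix.one_mul]
    have hBA : (X₀ᵀ * X₀ + γ • (1 - A * (Aᵀ * A)⁻¹ * Aᵀ)) * A = (X₀ᵀ * X₀) * A := by
      rw [Matrix.add_mul, Matrix.smul_mul, hQA, smul_zero, add_zero]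
    have hBQ : (X₀ᵀ * X₀ + γ • (1 - A * (Aᵀ * A)⁻¹ * Aᵀ)) * (1 - A * (Aᵀ * A)⁻¹ * Aᵀ)
        = F - γ • (A * (Aᵀ * A)⁻¹ * Aᵀ) := by
      rw [hFdef, Matrix.add_mul, Matrix.smul_mul, hQQ, smul_sub]
      abel
    set W1 : Matrix (Fin n) (Fin n) ℝ :=
      A * ((Aᵀ * A)⁻¹ * (NN⁻¹ * ((Aᵀ * A)⁻¹ * (Aᵀ * F⁻¹)))) with hW1def
    set W2 : Matrix (Fin n) (Fin n) ℝ := (1 - A * (Aᵀ * A)⁻¹ * Aᵀ) * F⁻¹ with hW2def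
    set W3 : Matrix (Fin n) (Fin n) ℝ :=
      (1 - A * (Aᵀ * A)⁻¹ * Aᵀ) * (F⁻¹ * (X₀ᵀ * (X₀ * W1))) with hW3def
    have t1 : (X₀ᵀ * X₀ + γ • (1 - A * (Aᵀ * A)⁻¹ * Aᵀ)) * W1 = (X₀ᵀ * X₀) * W1 := by
      rw [hW1def, ← Matrix.mul_assoc, hBA, Matrix.mul_assoc]
    have t2 : (X₀ᵀ * X₀ + γ • (1 - A * (Aᵀ * A)⁻¹ * Aᵀ)) * W2
        = 1 - γ • (A * ((Aᵀ * A)⁻¹ * (Aᵀ * F⁻¹))) := by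
      rw [hW2def, ← Matrix.mul_assoc, hBQ, Matrix.sub_mul, hFFr, Matrix.smul_mul]
      simp only [Matrix.mul_assoc]
    have s1 : F * (F⁻¹ * (X₀ᵀ * (X₀ * W1))) = (X₀ᵀ * X₀) * W1 := by
      rw [← Matrix.mul_assoc, hFFr, Matrix.one_mul, Matrix.mul_assoc]
    have s2 : (A * (Aᵀ * A)⁻¹ * Aᵀ) * (F⁻¹ * (X₀ᵀ * (X₀ * W1)))
        = A * ((Aᵀ * A)⁻¹ * (Aᵀ * F⁻¹)) := by
      rw [hW1def]
      simp only [Matrix.mul_assoc]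
      rw [hAZ, hAAY']
    have t3 : (X₀ᵀ * X₀ + γ • (1 - A * (Aᵀ * A)⁻¹ * Aᵀ)) * W3
        = (X₀ᵀ * X₀) * W1 - γ • (A * ((Aᵀ * A)⁻¹ * (Aᵀ * F⁻¹))) := by
      rw [hW3def, ← Matrix.mul_assoc, hBQ, Matrix.sub_mul, Matrix.smul_mul, s1, s2]
    have hWB : (X₀ᵀ * X₀ + γ • (1 - A * (Aᵀ * A)⁻¹ * Aᵀ)) * (W1 + W2 - W3) = 1 := by
      rw [Matrix.mul_sub, Matrix.mul_add, t1, t2, t3]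
      abel
    have hBinv : (X₀ᵀ * X₀ + γ • (1 - A * (Aᵀ * A)⁻¹ * Aᵀ))⁻¹ = W1 + W2 - W3 :=
      Matrix.inv_eq_right_inv hWB
    have hDS : Dt * (Sg γ)⁻¹ = X' * ((1 - A * (Aᵀ * A)⁻¹ * Aᵀ) * (F⁻¹ * X₀ᵀ)) := by
      rw [hDt]
      simp only [Matrix.mul_assoc, hXS]
    have hM'2 : M' = X' * (A * (Aᵀ * A)⁻¹) := by rw [hM', Matrix.mul_assoc]
    have hmat : M' * ((M₀ᵀ * (Sg γ)⁻¹ * M₀)⁻¹ * (M₀ᵀ * (Sg γ)⁻¹)) +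
        (Dt * (Sg γ)⁻¹) * (1 - M₀ * ((M₀ᵀ * (Sg γ)⁻¹ * M₀)⁻¹ * (M₀ᵀ * (Sg γ)⁻¹)))
        = X' * (X₀ᵀ * X₀ + γ • (1 - A * (Aᵀ * A)⁻¹ * Aᵀ))⁻¹ * X₀ᵀ := by
      rw [hN, hMS, hDS, hM'2, hM₀, hBinv]
      have ha : X' * (A * (Aᵀ * A)⁻¹) * (NN⁻¹ * ((Aᵀ * A)⁻¹ * (Aᵀ * (F⁻¹ * X₀ᵀ))))
          = X' * W1 * X₀ᵀ := by
        rw [hW1def]; simp only [Matrix.mul_assoc]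
      have hb : X' * ((1 - A * (Aᵀ * A)⁻¹ * Aᵀ) * (F⁻¹ * X₀ᵀ)) = X' * W2 * X₀ᵀ := by
        rw [hW2def]; simp only [Matrix.mul_assoc]
      have hcc : X' * ((1 - A * (Aᵀ * A)⁻¹ * Aᵀ) * (F⁻¹ * X₀ᵀ)) *
          (X₀ * A * (Aᵀ * A)⁻¹ * (NN⁻¹ * ((Aᵀ * A)⁻¹ * (Aᵀ * (F⁻¹ * X₀ᵀ)))))
          = X' * W3 * X₀ᵀ := by
        rw [hW3def, hW1def]; simp only [Matrix.mul_assoc]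
      rw [Matrix.mul_sub (X' * ((1 - A * (Aᵀ * A)⁻¹ * Aᵀ) * (F⁻¹ * X₀ᵀ))), Matrix.mul_one,
        Matrix.mul_sub X' (W1 + W2) W3, Matrix.mul_add X' W1 W2,
        Matrix.sub_mul (X' * W1 + X' * W2) (X' * W3) X₀ᵀ,
        Matrix.add_mul (X' * W1) (X' * W2) X₀ᵀ, ha, hcc, hb]
      abel
    have hvec : M' *ᵥ (((M₀ᵀ * (Sg γ)⁻¹ * M₀)⁻¹ * (M₀ᵀ * (Sg γ)⁻¹)) *ᵥ y₀) +
        (Dt * (Sg γ)⁻¹) *ᵥ (y₀ - M₀ *ᵥ (((M₀ᵀ * (Sg γ)⁻¹ * M₀)⁻¹ * (M₀ᵀ * (Sg γ)⁻¹)) *ᵥ y₀))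
        = (M' * ((M₀ᵀ * (Sg γ)⁻¹ * M₀)⁻¹ * (M₀ᵀ * (Sg γ)⁻¹)) +
          (Dt * (Sg γ)⁻¹) * (1 - M₀ * ((M₀ᵀ * (Sg γ)⁻¹ * M₀)⁻¹ * (M₀ᵀ * (Sg γ)⁻¹)))) *ᵥ y₀ := by
      simp only [Matrix.mulVec_mulVec, Matrix.mulVec_sub, Matrix.add_mulVec,
        Matrix.sub_mulVec, Matrix.mul_sub, Matrix.mul_one]
    rw [hvec, hmat]
  -- ### continuity of the regularized expression
  have hBcont : Continuous (fun γ : ℝ => X₀ᵀ * X₀ + γ • (1 - A * (Aᵀ * A)⁻¹ * Aᵀ)) :=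
    continuous_const.add (continuous_id.smul continuous_const)
  have hdetc : Continuous (fun γ : ℝ =>
      (X₀ᵀ * X₀ + γ • (1 - A * (Aᵀ * A)⁻¹ * Aᵀ)).det) := hBcont.matrix_det
  have hadjc : Continuous (fun γ : ℝ =>
      (X₀ᵀ * X₀ + γ • (1 - A * (Aᵀ * A)⁻¹ * Aᵀ)).adjugate) := hBcont.matrix_adjugate
  have hvc : Continuous (fun γ : ℝ =>
      (X' * (X₀ᵀ * X₀ + γ • (1 - A * (Aᵀ * A)⁻¹ * Aᵀ)).adjugate * X₀ᵀ) *ᵥ y₀) :=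
    ((continuous_const.matrix_mul hadjc).matrix_mul continuous_const).matrix_mulVec
      continuous_const
  have hdet0 : (X₀ᵀ * X₀ + (0 : ℝ) • (1 - A * (Aᵀ * A)⁻¹ * Aᵀ)).det ≠ 0 := by
    rw [zero_smul, add_zero]
    exact hCd.ne_zero
  have hic : ContinuousAt (fun γ : ℝ =>
      ((X₀ᵀ * X₀ + γ • (1 - A * (Aᵀ * A)⁻¹ * Aᵀ)).det)⁻¹) 0 :=
    hdetc.continuousAt.inv₀ hdet0
  have hc : ContinuousAt (fun γ : ℝ =>
      ((X₀ᵀ * X₀ + γ • (1 - A * (Aᵀ * A)⁻¹ * Aᵀ)).det)⁻¹ •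
        ((X' * (X₀ᵀ * X₀ + γ • (1 - A * (Aᵀ * A)⁻¹ * Aᵀ)).adjugate * X₀ᵀ) *ᵥ y₀)) 0 :=
    hic.smul hvc.continuousAt
  have hrw : ∀ γ : ℝ,
      ((X₀ᵀ * X₀ + γ • (1 - A * (Aᵀ * A)⁻¹ * Aᵀ)).det)⁻¹ •
        ((X' * (X₀ᵀ * X₀ + γ • (1 - A * (Aᵀ * A)⁻¹ * Aᵀ)).adjugate * X₀ᵀ) *ᵥ y₀)
      = (X' * (X₀ᵀ * X₀ + γ • (1 - A * (Aᵀ * A)⁻¹ * Aᵀ))⁻¹ * X₀ᵀ) *ᵥ y₀ := by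
    intro γ
    rw [Matrix.inv_def (X₀ᵀ * X₀ + γ • (1 - A * (Aᵀ * A)⁻¹ * Aᵀ)), Ring.inverse_eq_inv,
      Matrix.mul_smul, Matrix.smul_mul, Matrix.smul_mulVec]
  have h0 : ((X₀ᵀ * X₀ + (0 : ℝ) • (1 - A * (Aᵀ * A)⁻¹ * Aᵀ)).det)⁻¹ •
      ((X' * (X₀ᵀ * X₀ + (0 : ℝ) • (1 - A * (Aᵀ * A)⁻¹ * Aᵀ)).adjugate * X₀ᵀ) *ᵥ y₀)
      = (X' * (X₀ᵀ * X₀)⁻¹ * X₀ᵀ) *ᵥ y₀ := by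
    rw [hrw 0, zero_smul, add_zero]
  have htends : Filter.Tendsto
      (fun γ : ℝ => (X' * (X₀ᵀ * X₀ + γ • (1 - A * (Aᵀ * A)⁻¹ * Aᵀ))⁻¹ * X₀ᵀ) *ᵥ y₀)
      (nhdsWithin 0 (Set.Ioi 0)) (nhds ((X' * (X₀ᵀ * X₀)⁻¹ * X₀ᵀ) *ᵥ y₀)) := by
    have h1 := hc.tendsto
    rw [h0] at h1
    exact (h1.mono_left nhdsWithin_le_nhds).congr hrw
  exact Filter.Tendsto.congr'
    (Filter.eventuallyEq_of_mem self_mem_nhdsWithin fun γ (hγ : γ ∈ Set.Ioi 0) =>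
      (key γ hγ).symm) htends
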